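/- arXiv:2605.27783 — 2 statements merged into one kernel-verified Lean document; each statement's English description precedes it below -/
import Mathlib

section
/- By induction on j = k - i: if q^k(τ) satisfies |q^k(τ) - Q| ≤ Cε for all τ and for each i < k the function qⁱ solves (qⁱ)'(τ) + (k-i) qⁱ(τ) = α h_i(τ) with |h_i(τ) - q^{i+1}(τ)| ≤ C δ(τ) where δ(τ) = (τ + ln t₀)/√(t₀ e^τ), then for every i ∈ {1,…,k} there are constants C₁, C₂ such that |qⁱ(τ) - (α^{k-i}/(k-i)!) Q| ≤ C₁ ε + C₂ (1+τ) e^{-τ/2} for all τ ≥ 0. -/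
lemma ode_step (m : ℝ) (hm : 1 ≤ m) (q f : ℝ → ℝ) (L B₁ B₂ : ℝ)
    (hB₁ : 0 ≤ B₁) (hB₂ : 0 ≤ B₂)
    (hq : ∀ τ : ℝ, 0 ≤ τ → HasDerivAt q (f τ - m * q τ) τ)
    (hf : ∀ τ : ℝ, 0 ≤ τ → |f τ - m * L| ≤ B₁ + B₂ * (1 + τ) * Real.exp (-τ / 2)) :
    ∀ τ : ℝ, 0 ≤ τ →
      |q τ - L| ≤ B₁ / m + (|q 0 - L| + 2 * B₂) * (1 + τ) * Real.exp (-τ / 2) := by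
  have hm0 : 0 < m := lt_of_lt_of_le one_pos hm
  set c : ℝ := m - 1/2 with hc_def
  have hc0 : (0:ℝ) < c := by rw [hc_def]; linarith
  set g : ℝ → ℝ := fun s => Real.exp (m * s) * (q s - L) with hg_def
  set φ : ℝ → ℝ := fun s =>
    B₁ / m * Real.exp (m * s) + B₂ / c * ((1 + s) * Real.exp (c * s)) with hφ_def
  have hexp' : ∀ (a s : ℝ), HasDerivAt (fun s : ℝ => Real.exp (a * s)) (Real.exp (a * s) * a) s := by
    intro a s
    exact ((Real.hasDerivAt_exp (a * s)).comp s ((hasDerivAt_id s).const_mul a)).congr_deriv (by simp)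
  have hg' : ∀ s : ℝ, 0 ≤ s → HasDerivAt g (Real.exp (m * s) * (f s - m * L)) s := by
    intro s hs
    have h2 := (hexp' m s).mul ((hq s hs).sub_const L)
    refine h2.congr_deriv ?_
    ring
  have hφ' : ∀ s : ℝ, HasDerivAt φ
      (B₁ * Real.exp (m * s) + B₂ / c * Real.exp (c * s) + B₂ * ((1 + s) * Real.exp (c * s))) s := by
    intro s
    have h3 : HasDerivAt (fun s : ℝ => (1 + s)) 1 s := (hasDerivAt_id s).const_add 1
    have h4 := h3.mul (hexp' c s)
    have h5 := ((hexp' m s).const_mul (B₁ / m)).add (h4.const_mul (B₂ / c))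
    refine h5.congr_deriv ?_
    field_simp
    ring
  have hkey : ∀ s : ℝ, 0 ≤ s → |Real.exp (m * s) * (f s - m * L)| ≤
      B₁ * Real.exp (m * s) + B₂ / c * Real.exp (c * s) + B₂ * ((1 + s) * Real.exp (c * s)) := by
    intro s hs
    rw [abs_mul, abs_of_pos (Real.exp_pos _)]
    have h1 : Real.exp (m * s) * |f s - m * L| ≤
        Real.exp (m * s) * (B₁ + B₂ * (1 + s) * Real.exp (-s / 2)) :=
      mul_le_mul_of_nonneg_left (hf s hs) (Real.exp_pos _).le
    have h2 : Real.exp (m * s) * Real.exp (-s / 2) = Real.exp (c * s) := by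
      rw [← Real.exp_add]; congr 1; rw [hc_def]; ring
    have h3 : Real.exp (m * s) * (B₁ + B₂ * (1 + s) * Real.exp (-s / 2)) =
        B₁ * Real.exp (m * s) + B₂ * ((1 + s) * Real.exp (c * s)) := by
      rw [← h2]; ring
    have h4 : 0 ≤ B₂ / c * Real.exp (c * s) := by positivity
    linarith [h1]
  have hcontg : ContinuousOn g (Set.Ici (0:ℝ)) :=
    fun s hs => ((hg' s hs).continuousAt).continuousWithinAt
  have hcontφ : Continuous φ := by
    rw [hφ_def]; fun_prop
  have mono : ∀ σ : ℝ, |σ| = 1 → MonotoneOn (fun s => φ s + σ * g s) (Set.Ici (0:ℝ)) := by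
    intro σ hσ
    apply monotoneOn_of_deriv_nonneg (convex_Ici 0)
    · exact hcontφ.continuousOn.add (continuousOn_const.mul hcontg)
    · intro s hs
      rw [interior_Ici] at hs
      exact ((hφ' s).add ((hg' s hs.le).const_mul σ)).differentiableAt.differentiableWithinAt
    · intro s hs
      rw [interior_Ici] at hs
      rw [show deriv (fun s => φ s + σ * g s) s = _ from ((hφ' s).add ((hg' s hs.le).const_mul σ)).deriv]
      have h1 : |σ * (Real.exp (m * s) * (f s - m * L))| ≤
          B₁ * Real.exp (m * s) + B₂ / c * Real.exp (c * s) + B₂ * ((1 + s) * Real.exp (c * s)) := by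
        rw [abs_mul, hσ, one_mul]; exact hkey s hs.le
      have h2 := neg_abs_le (σ * (Real.exp (m * s) * (f s - m * L)))
      linarith
  intro τ hτ
  have h1 := mono 1 (by norm_num) (Set.self_mem_Ici) (by exact hτ) hτ
  have h2 := mono (-1) (by norm_num) (Set.self_mem_Ici) (by exact hτ) hτ
  simp only [one_mul, neg_one_mul] at h1 h2
  have hg0 : g 0 = q 0 - L := by simp [hg_def]
  have hgτ : g τ = Real.exp (m * τ) * (q τ - L) := rfl
  have habsg : |g τ| ≤ |q 0 - L| + (φ τ - φ 0) := by
    rw [abs_le]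
    constructor
    · have := neg_abs_le (q 0 - L)
      rw [hg0] at h1
      linarith
    · have := le_abs_self (q 0 - L)
      rw [hg0] at h2
      linarith
  have hφτ : φ τ - φ 0 = B₁ / m * (Real.exp (m * τ) - 1)
      + B₂ / c * ((1 + τ) * Real.exp (c * τ) - 1) := by
    simp [hφ_def]; ring
  have hE : (0:ℝ) < Real.exp (m * τ) := Real.exp_pos _
  have hq_eq : |q τ - L| = |g τ| / Real.exp (m * τ) := by
    rw [hgτ, abs_mul, abs_of_pos hE, mul_div_assoc, mul_comm]
    field_simp
  rw [hq_eq]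
  rw [div_le_iff₀ hE]
  -- goal : |g τ| ≤ (B₁/m + (|q 0 - L| + 2*B₂)*(1+τ)*exp(-τ/2)) * exp (m*τ)
  have hcm : Real.exp (c * τ) = Real.exp (-τ / 2) * Real.exp (m * τ) := by
    rw [← Real.exp_add]; congr 1; rw [hc_def]; ring
  have h1m : (1:ℝ) ≤ Real.exp (m * τ) := by
    rw [← Real.exp_zero]; exact Real.exp_le_exp.mpr (by positivity)
  have hBm : 0 ≤ B₁ / m := by positivity
  have hq0 : 0 ≤ |q 0 - L| := abs_nonneg _
  have hexpτ : 0 < Real.exp (-τ / 2) := Real.exp_pos _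
  have hent : Real.exp (-τ / 2) * Real.exp (m * τ) ≥ 1 := by
    rw [← Real.exp_add, ← Real.exp_zero]
    apply Real.exp_le_exp.mpr
    nlinarith
  have hBc : B₂ / c ≤ 2 * B₂ := by
    rw [div_le_iff₀ hc0]
    nlinarith [mul_nonneg hB₂ (show (0:ℝ) ≤ 2 * c - 1 by rw [hc_def]; linarith)]
  have h1τ : (1:ℝ) ≤ 1 + τ := by linarith
  calc |g τ| ≤ |q 0 - L| + (φ τ - φ 0) := habsg
    _ = |q 0 - L| + B₁ / m * (Real.exp (m * τ) - 1)
        + B₂ / c * ((1 + τ) * Real.exp (c * τ) - 1) := by rw [hφτ]; ring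
    _ ≤ |q 0 - L| * ((1 + τ) * (Real.exp (-τ/2) * Real.exp (m * τ)))
        + B₁ / m * Real.exp (m * τ)
        + 2 * B₂ * ((1 + τ) * Real.exp (c * τ)) := by
        have e1 : |q 0 - L| ≤ |q 0 - L| * ((1 + τ) * (Real.exp (-τ/2) * Real.exp (m * τ))) := by
          apply le_mul_of_one_le_right hq0
          calc (1:ℝ) ≤ Real.exp (-τ/2) * Real.exp (m * τ) := hent
            _ ≤ (1 + τ) * (Real.exp (-τ/2) * Real.exp (m * τ)) :=
              le_mul_of_one_le_left (by positivity) h1τ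
        have e2 : B₁ / m * (Real.exp (m * τ) - 1) ≤ B₁ / m * Real.exp (m * τ) :=
          mul_le_mul_of_nonneg_left (by linarith) hBm
        have e3 : B₂ / c * ((1 + τ) * Real.exp (c * τ) - 1) ≤ 2 * B₂ * ((1 + τ) * Real.exp (c * τ)) := by
          have hBcc : 0 ≤ B₂ / c := by positivity
          have hpos : 0 ≤ (1 + τ) * Real.exp (c * τ) := by positivity
          have f1 : B₂ / c * ((1 + τ) * Real.exp (c * τ) - 1) ≤ B₂ / c * ((1 + τ) * Real.exp (c * τ)) := by
            apply mul_le_mul_of_nonneg_left _ hBcc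
            linarith
          have f2 : B₂ / c * ((1 + τ) * Real.exp (c * τ)) ≤ 2 * B₂ * ((1 + τ) * Real.exp (c * τ)) :=
            mul_le_mul_of_nonneg_right hBc hpos
          linarith
        linarith
    _ = (B₁ / m + (|q 0 - L| + 2 * B₂) * (1 + τ) * Real.exp (-τ / 2)) * Real.exp (m * τ) := by
        rw [hcm]; ring

lemma delta_bound (t₀ : ℝ) (ht₀ : 1 ≤ t₀) (τ : ℝ) (hτ : 0 ≤ τ) :
    (τ + Real.log t₀) / Real.sqrt (t₀ * Real.exp τ) ≤ 2 * (1 + τ) * Real.exp (-τ / 2) := by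
  have ht0 : (0:ℝ) < t₀ := lt_of_lt_of_le one_pos ht₀
  have hs1 : (1:ℝ) ≤ Real.sqrt t₀ := by
    rw [show (1:ℝ) = Real.sqrt 1 by simp]
    exact Real.sqrt_le_sqrt ht₀
  have hs0 : (0:ℝ) < Real.sqrt t₀ := lt_of_lt_of_le one_pos hs1
  have hlog : Real.log t₀ ≤ 2 * Real.sqrt t₀ := by
    have h1 : Real.log (Real.sqrt t₀) ≤ Real.sqrt t₀ - 1 := Real.log_le_sub_one_of_pos hs0
    have h2 : Real.log (Real.sqrt t₀) = Real.log t₀ / 2 := Real.log_sqrt ht0.le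
    linarith
  have hsqexp : Real.sqrt (Real.exp τ) = Real.exp (τ / 2) := by
    rw [show Real.exp τ = Real.exp (τ/2) ^ 2 by rw [sq, ← Real.exp_add]; ring_nf]
    exact Real.sqrt_sq (Real.exp_pos _).le
  have hsqrt : Real.sqrt (t₀ * Real.exp τ) = Real.sqrt t₀ * Real.exp (τ / 2) := by
    rw [Real.sqrt_mul ht0.le, hsqexp]
  rw [hsqrt, div_le_iff₀ (by positivity)]
  have hee : Real.exp (-τ / 2) * Real.exp (τ / 2) = 1 := by
    rw [← Real.exp_add]; ring_nf; exact Real.exp_zero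
  have hrw : 2 * (1 + τ) * Real.exp (-τ / 2) * (Real.sqrt t₀ * Real.exp (τ / 2)) =
      2 * (1 + τ) * Real.sqrt t₀ := by
    calc 2 * (1 + τ) * Real.exp (-τ / 2) * (Real.sqrt t₀ * Real.exp (τ / 2)) =
        2 * (1 + τ) * Real.sqrt t₀ * (Real.exp (-τ / 2) * Real.exp (τ / 2)) := by ring
      _ = 2 * (1 + τ) * Real.sqrt t₀ := by rw [hee, mul_one]
  rw [hrw]
  nlinarith [mul_le_mul_of_nonneg_left hs1 hτ]


/-- induction on the cascading components: if `|q^k(τ) - Q| ≤ Cε` and for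
`1 ≤ i < k` the function `qⁱ` solves `(qⁱ)' + (k-i)qⁱ = α hᵢ` with
`|hᵢ(τ) - q^{i+1}(τ)| ≤ C δ(τ)`, `δ(τ) = (τ + ln t₀)/√(t₀ e^τ)`, then for every
`1 ≤ i ≤ k` there are constants `C₁, C₂` with
`|qⁱ(τ) - (α^{k-i}/(k-i)!) Q| ≤ C₁ε + C₂(1+τ)e^{-τ/2}` for all `τ ≥ 0`. -/
theorem stmt_8 (k : ℕ) (hk : 1 ≤ k) (α ε t₀ Q C : ℝ)
    (hα : 0 < α) (hε : 0 ≤ ε) (ht₀ : 1 ≤ t₀) (hC : 0 < C)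
    (q h : ℕ → ℝ → ℝ)
    (hqk : ∀ τ : ℝ, 0 ≤ τ → |q k τ - Q| ≤ C * ε)
    (hcont : ∀ i, 1 ≤ i → i < k → Continuous (h i))
    (hode : ∀ i, 1 ≤ i → i < k → ∀ τ : ℝ, 0 ≤ τ →
      HasDerivAt (q i) (α * h i τ - ((k : ℝ) - i) * q i τ) τ)
    (hh : ∀ i, 1 ≤ i → i < k → ∀ τ : ℝ, 0 ≤ τ →
      |h i τ - q (i + 1) τ| ≤ C * ((τ + Real.log t₀) / Real.sqrt (t₀ * Real.exp τ))) :
    ∀ i, 1 ≤ i → i ≤ k → ∃ C₁ C₂ : ℝ, ∀ τ : ℝ, 0 ≤ τ →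
      |q i τ - (α ^ (k - i) / (Nat.factorial (k - i)) : ℝ) * Q| ≤
        C₁ * ε + C₂ * (1 + τ) * Real.exp (-τ / 2) := by
  suffices H : ∀ d i : ℕ, i + d = k → 1 ≤ i → ∃ C₁ C₂ : ℝ, 0 ≤ C₁ ∧ 0 ≤ C₂ ∧
      ∀ τ : ℝ, 0 ≤ τ → |q i τ - (α ^ (k - i) / (Nat.factorial (k - i)) : ℝ) * Q| ≤
        C₁ * ε + C₂ * (1 + τ) * Real.exp (-τ / 2) by
    intro i h1 h2
    obtain ⟨C₁, C₂, _, _, hb⟩ := H (k - i) i (by omega) h1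
    exact ⟨C₁, C₂, hb⟩
  intro d
  induction d with
  | zero =>
    intro i hik h1
    have hik' : i = k := by omega
    subst hik'
    refine ⟨C, 0, hC.le, le_rfl, ?_⟩
    intro τ hτ
    have h0 := hqk τ hτ
    have he : (α ^ (i - i) / (Nat.factorial (i - i)) : ℝ) * Q = Q := by
      simp [Nat.sub_self]
    rw [he]
    simpa using h0
  | succ d ih =>
    intro i hik h1
    obtain ⟨C₁, C₂, hC₁, hC₂, hb⟩ := ih (i + 1) (by omega) (by omega)
    have hiklt : i < k := by omega
    have hm : (1:ℝ) ≤ (k:ℝ) - i := by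
      have : ((i + 1 : ℕ) : ℝ) ≤ (k : ℝ) := by exact_mod_cast hiklt
      push_cast at this
      linarith
    set L : ℝ := (α ^ (k - i) / (Nat.factorial (k - i)) : ℝ) * Q with hL
    set A : ℝ := (α ^ (k - (i + 1)) / (Nat.factorial (k - (i + 1))) : ℝ) * Q with hA
    have hki : k - i = d + 1 := by omega
    have hki' : k - (i + 1) = d := by omega
    have hmL : ((k:ℝ) - i) * L = α * A := by
      rw [hL, hA, hki, hki']
      have hkr : (k:ℝ) - (i:ℝ) = (d:ℝ) + 1 := by
        have hkk : k = i + (d + 1) := by omega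
        rw [hkk]; push_cast; ring
      rw [hkr, Nat.factorial_succ, pow_succ]
      have hf0 : ((Nat.factorial d : ℝ)) ≠ 0 := by
        exact_mod_cast (Nat.factorial_pos d).ne'
      push_cast
      field_simp
    have hbound : ∀ τ : ℝ, 0 ≤ τ →
        |(fun τ => α * h i τ) τ - ((k:ℝ) - i) * L| ≤
          α * C₁ * ε + α * (2 * C + C₂) * (1 + τ) * Real.exp (-τ / 2) := by
      intro τ hτ
      simp only
      rw [hmL]
      have h1b := hh i h1 hiklt τ hτ
      have h2b := hb τ hτ

      have h3 := delta_bound t₀ ht₀ τ hτ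
      have habs : |α * h i τ - α * A| = α * |h i τ - A| := by
        rw [← mul_sub, abs_mul, abs_of_pos hα]
      rw [habs]
      have h5 : |h i τ - A| ≤ C₁ * ε + (2 * C + C₂) * (1 + τ) * Real.exp (-τ / 2) := by
        have hd : C * ((τ + Real.log t₀) / Real.sqrt (t₀ * Real.exp τ)) ≤
            C * (2 * (1 + τ) * Real.exp (-τ / 2)) := mul_le_mul_of_nonneg_left h3 hC.le
        calc |h i τ - A| ≤ |h i τ - q (i + 1) τ| + |q (i + 1) τ - A| := abs_sub_le _ _ _
          _ ≤ C₁ * ε + (2 * C + C₂) * (1 + τ) * Real.exp (-τ / 2) := by linarith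
      calc α * |h i τ - A| ≤ α * (C₁ * ε + (2 * C + C₂) * (1 + τ) * Real.exp (-τ / 2)) :=
            mul_le_mul_of_nonneg_left h5 hα.le
        _ = α * C₁ * ε + α * (2 * C + C₂) * (1 + τ) * Real.exp (-τ / 2) := by ring
    have key := ode_step ((k:ℝ) - i) hm (q i) (fun τ => α * h i τ) L
      (α * C₁ * ε) (α * (2 * C + C₂)) (by positivity) (by positivity)
      (fun τ hτ => hode i h1 hiklt τ hτ) hbound
    refine ⟨α * C₁ / ((k:ℝ) - i), |q i 0 - L| + 2 * (α * (2 * C + C₂)), ?_, ?_, ?_⟩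
    · positivity
    · positivity
    · intro τ hτ

      calc |q i τ - L| ≤ α * C₁ * ε / ((k:ℝ) - i) +
            (|q i 0 - L| + 2 * (α * (2 * C + C₂))) * (1 + τ) * Real.exp (-τ / 2) := key τ hτ
        _ = α * C₁ / ((k:ℝ) - i) * ε +
            (|q i 0 - L| + 2 * (α * (2 * C + C₂))) * (1 + τ) * Real.exp (-τ / 2) := by ring
end

section
/- Let γ ∈ (0,1/3), δ > 0, λ > 0 small, and define s̄(t,x) = t^{-λ} cos(x/t^{γ+δ}) for |x| ≤ t^γ. There exist constants c₁, c₂ > 0 with c₁ t^{-λ} ≤ s̄(t,x) ≤ c₂ t^{-λ} for all t ≥ 1 and |x| ≤ t^γ, and moreover s̄_t - s̄_{xx} ≥ (t^{-2(γ+δ)} - (λ + C t^{-δ}) t^{-1}) s̄(t,x) for all t ≥ 1 and |x| ≤ t^γ, where C depends only on γ, δ. In particular, if δ and λ are small enough (so that 2(γ+δ) < 1), then for all sufficiently large t, s̄_t - s̄_{xx} ≥ (1/2) t^{-2(γ+δ)} s̄(t,x). -/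
private lemma d16_t (lam a x t : ℝ) (ht : 0 < t) :
    deriv (fun s : ℝ => s ^ (-lam) * Real.cos (x / s ^ a)) t
      = -lam * t ^ (-lam - 1) * Real.cos (x / t ^ a)
        + t ^ (-lam) * (Real.sin (x / t ^ a) * (x * (a * t ^ (a - 1)) / (t ^ a) ^ 2)) := by
  have h1 : HasDerivAt (fun s : ℝ => s ^ (-lam)) (-lam * t ^ (-lam - 1)) t :=
    Real.hasDerivAt_rpow_const (Or.inl ht.ne')
  have h2 : HasDerivAt (fun s : ℝ => s ^ a) (a * t ^ (a - 1)) t :=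
    Real.hasDerivAt_rpow_const (Or.inl ht.ne')
  have hta : t ^ a ≠ 0 := (Real.rpow_pos_of_pos ht a).ne'
  have h3 : HasDerivAt (fun s : ℝ => x / s ^ a)
      ((0 * t ^ a - x * (a * t ^ (a - 1))) / (t ^ a) ^ 2) t :=
    (hasDerivAt_const t x).div h2 hta
  have h5 : HasDerivAt (fun s : ℝ => s ^ (-lam) * Real.cos (x / s ^ a)) _ t := h1.mul h3.cos
  rw [h5.deriv]; ring

private lemma d16_xx (lam a t x : ℝ) :
    deriv (deriv (fun y : ℝ => t ^ (-lam) * Real.cos (y / t ^ a))) x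
      = t ^ (-lam) * (-(Real.cos (x / t ^ a) * (1 / t ^ a)) * (1 / t ^ a)) := by
  have e : deriv (fun y : ℝ => t ^ (-lam) * Real.cos (y / t ^ a))
      = fun y => t ^ (-lam) * (-Real.sin (y / t ^ a) * (1 / t ^ a)) := by
    funext y
    have h : HasDerivAt (fun y : ℝ => y / t ^ a) (1 / t ^ a) y := by
      simpa using (hasDerivAt_id y).div_const (t ^ a)
    exact ((h.cos).const_mul _).deriv
  rw [e]
  have h : HasDerivAt (fun y : ℝ => y / t ^ a) (1 / t ^ a) x := by
    simpa using (hasDerivAt_id x).div_const (t ^ a)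
  exact (((h.sin.neg).mul_const _).const_mul _).deriv

-- facts about u = x / t^a
private lemma d16_u (γ δ : ℝ) (hγ0 : 0 < γ) (hδ : 0 < δ) (t x : ℝ) (ht : 1 ≤ t)
    (hx : |x| ≤ t ^ γ) : |x / t ^ (γ + δ)| ≤ 1 := by
  have ht0 : (0:ℝ) < t := lt_of_lt_of_le one_pos ht
  have hta : (0:ℝ) < t ^ (γ + δ) := Real.rpow_pos_of_pos ht0 _
  rw [abs_div, abs_of_pos hta, div_le_one hta]
  calc |x| ≤ t ^ γ := hx
    _ ≤ t ^ (γ + δ) := Real.rpow_le_rpow_of_exponent_le ht (by linarith)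

private lemma d16_core (γ δ lam : ℝ) (hγ0 : 0 < γ) (hδ : 0 < δ) (t x : ℝ) (ht : 1 ≤ t)
    (hx : |x| ≤ t ^ γ) :
    deriv (fun s : ℝ => s ^ (-lam) * Real.cos (x / s ^ (γ + δ))) t
      - deriv (deriv (fun y : ℝ => t ^ (-lam) * Real.cos (y / t ^ (γ + δ)))) x
      ≥ (t ^ (-(2 * (γ + δ))) - lam * t ^ (-1 : ℝ)) *
        (t ^ (-lam) * Real.cos (x / t ^ (γ + δ))) := by
  set a := γ + δ with ha
  have ht0 : (0:ℝ) < t := lt_of_lt_of_le one_pos ht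
  have hta : (0:ℝ) < t ^ a := Real.rpow_pos_of_pos ht0 _
  have hu : |x / t ^ a| ≤ 1 := d16_u γ δ hγ0 hδ t x ht hx
  have hpi : (1:ℝ) ≤ Real.pi := by linarith [Real.pi_gt_three]
  -- x * sin u ≥ 0
  have hxs : 0 ≤ x * Real.sin (x / t ^ a) := by
    rcases le_or_gt 0 x with hx0 | hx0
    · refine mul_nonneg hx0 (Real.sin_nonneg_of_nonneg_of_le_pi (div_nonneg hx0 hta.le) ?_)
      exact le_trans (le_trans (le_abs_self _) hu) hpi
    · have hu0 : x / t ^ a ≤ 0 := div_nonpos_of_nonpos_of_nonneg hx0.le hta.le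
      have : Real.sin (x / t ^ a) ≤ 0 := by
        exact Real.sin_nonpos_of_nonpos_of_neg_pi_le hu0
          (by have := (abs_le.mp hu).1; linarith)
      nlinarith [this, hx0.le]
  rw [d16_t lam a x t ht0, d16_xx lam a t x]
  have e1 : t ^ (-lam - 1) = t ^ (-lam) * t ^ (-1 : ℝ) := by
    rw [← Real.rpow_add ht0]; ring_nf
  have e2 : t ^ (-(2 * a)) = (1 / t ^ a) * (1 / t ^ a) := by
    rw [show -(2*a) = -a + -a by ring, Real.rpow_add ht0, Real.rpow_neg ht0.le, one_div]
  have hE : 0 ≤ t ^ (-lam) * (Real.sin (x / t ^ a) * (x * (a * t ^ (a - 1)) / (t ^ a) ^ 2)) := by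
    apply mul_nonneg (Real.rpow_pos_of_pos ht0 _).le
    have e3 : Real.sin (x / t ^ a) * (x * (a * t ^ (a - 1)) / (t ^ a) ^ 2)
        = (x * Real.sin (x / t ^ a)) * (a * t ^ (a - 1) / (t ^ a) ^ 2) := by ring
    rw [e3]
    refine mul_nonneg hxs (div_nonneg (mul_nonneg (by positivity) ?_) (sq_nonneg _))
    exact (Real.rpow_pos_of_pos ht0 _).le
  have key : -lam * t ^ (-lam - 1) * Real.cos (x / t ^ a)
        + t ^ (-lam) * (Real.sin (x / t ^ a) * (x * (a * t ^ (a - 1)) / (t ^ a) ^ 2))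
      - t ^ (-lam) * (-(Real.cos (x / t ^ a) * (1 / t ^ a)) * (1 / t ^ a))
      = (t ^ (-(2 * a)) - lam * t ^ (-1 : ℝ)) * (t ^ (-lam) * Real.cos (x / t ^ a))
        + t ^ (-lam) * (Real.sin (x / t ^ a) * (x * (a * t ^ (a - 1)) / (t ^ a) ^ 2)) := by
    rw [e1, e2]; ring
  linarith [key, hE]

private lemma d16_cos (γ δ : ℝ) (hγ0 : 0 < γ) (hδ : 0 < δ) (t x : ℝ) (ht : 1 ≤ t)
    (hx : |x| ≤ t ^ γ) : Real.cos 1 ≤ Real.cos (x / t ^ (γ + δ)) := by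
  have hu : |x / t ^ (γ + δ)| ≤ 1 := d16_u γ δ hγ0 hδ t x ht hx
  calc Real.cos 1 ≤ Real.cos |x / t ^ (γ + δ)| :=
        Real.cos_le_cos_of_nonneg_of_le_pi (abs_nonneg _)
          (by linarith [Real.pi_gt_three]) hu
    _ = Real.cos (x / t ^ (γ + δ)) := Real.cos_abs _

/-- for `γ ∈ (0,1/3)`, `δ, λ > 0`, the function
`s̄(t,x) = t^{-λ} cos(x/t^{γ+δ})` satisfies `c₁ t^{-λ} ≤ s̄ ≤ c₂ t^{-λ}` on
`{t ≥ 1, |x| ≤ t^γ}`, and `s̄_t - s̄_{xx} ≥ (t^{-2(γ+δ)} - (λ + C t^{-δ})t^{-1}) s̄` there;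
in particular if `2(γ+δ) < 1` then `s̄_t - s̄_{xx} ≥ (1/2) t^{-2(γ+δ)} s̄` for all
sufficiently large `t` and `|x| ≤ t^γ`. -/
theorem stmt_16 (γ δ lam : ℝ) (hγ : γ ∈ Set.Ioo (0 : ℝ) (1 / 3)) (hδ : 0 < δ)
    (hlam : 0 < lam) :
    (let sbar : ℝ → ℝ → ℝ := fun t x => t ^ (-lam) * Real.cos (x / t ^ (γ + δ))
    (∃ c₁ > 0, ∃ c₂ > 0, ∀ t : ℝ, 1 ≤ t → ∀ x : ℝ, |x| ≤ t ^ γ →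
      c₁ * t ^ (-lam) ≤ sbar t x ∧ sbar t x ≤ c₂ * t ^ (-lam)) ∧
    (∃ C : ℝ, ∀ t : ℝ, 1 ≤ t → ∀ x : ℝ, |x| ≤ t ^ γ →
      deriv (fun s => sbar s x) t - deriv (deriv (fun y => sbar t y)) x ≥
        (t ^ (-(2 * (γ + δ))) - (lam + C * t ^ (-δ)) * t ^ (-1 : ℝ)) * sbar t x) ∧
    (2 * (γ + δ) < 1 → ∃ T : ℝ, ∀ t : ℝ, T ≤ t → ∀ x : ℝ, |x| ≤ t ^ γ →
      deriv (fun s => sbar s x) t - deriv (deriv (fun y => sbar t y)) x ≥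
        (1 / 2) * t ^ (-(2 * (γ + δ))) * sbar t x)) := by
  obtain ⟨hγ0, hγ3⟩ := hγ
  refine ⟨⟨Real.cos 1, Real.cos_one_pos, 1, one_pos, ?_⟩, ⟨0, ?_⟩, ?_⟩
  · intro t ht x hx
    have ht0 : (0:ℝ) < t := lt_of_lt_of_le one_pos ht
    have hP : (0:ℝ) < t ^ (-lam) := Real.rpow_pos_of_pos ht0 _
    have hc := d16_cos γ δ hγ0 hδ t x ht hx
    constructor
    · calc Real.cos 1 * t ^ (-lam) = t ^ (-lam) * Real.cos 1 := by ring
        _ ≤ t ^ (-lam) * Real.cos (x / t ^ (γ + δ)) :=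
          mul_le_mul_of_nonneg_left hc hP.le
    · calc t ^ (-lam) * Real.cos (x / t ^ (γ + δ)) ≤ t ^ (-lam) * 1 :=
          mul_le_mul_of_nonneg_left (Real.cos_le_one _) hP.le
        _ = 1 * t ^ (-lam) := by ring
  · intro t ht x hx
    have h := d16_core γ δ lam hγ0 hδ t x ht hx
    simpa using h
  · intro h2a
    have hp : (0:ℝ) < 1 - 2 * (γ + δ) := by linarith
    set p := 1 - 2 * (γ + δ) with hpdef
    refine ⟨max 1 ((2 * lam) ^ p⁻¹), ?_⟩
    intro t htT x hx
    have ht : 1 ≤ t := le_trans (le_max_left _ _) htT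
    have ht0 : (0:ℝ) < t := lt_of_lt_of_le one_pos ht
    have hB : (0:ℝ) ≤ (2 * lam) ^ p⁻¹ := Real.rpow_nonneg (by linarith) _
    have htp : 2 * lam ≤ t ^ p := by
      have h1 : ((2 * lam) ^ p⁻¹ : ℝ) ^ p ≤ t ^ p :=
        Real.rpow_le_rpow hB (le_trans (le_max_right _ _) htT) hp.le
      rwa [Real.rpow_inv_rpow (by linarith) hp.ne'] at h1
    have hcoef : lam * t ^ (-1 : ℝ) ≤ (1/2) * t ^ (-(2 * (γ + δ))) := by
      have e : t ^ (-1 : ℝ) = t ^ (-(2 * (γ + δ))) * (t ^ p)⁻¹ := by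
        rw [← Real.rpow_neg ht0.le p, ← Real.rpow_add ht0]
        congr 1; rw [hpdef]; ring
      rw [e]
      have h6 : (t ^ p)⁻¹ ≤ (2 * lam)⁻¹ :=
        inv_anti₀ (by linarith) htp
      calc lam * (t ^ (-(2 * (γ + δ))) * (t ^ p)⁻¹)
          ≤ lam * (t ^ (-(2 * (γ + δ))) * (2 * lam)⁻¹) := by
            apply mul_le_mul_of_nonneg_left _ hlam.le
            exact mul_le_mul_of_nonneg_left h6 (Real.rpow_nonneg ht0.le _)
        _ = (1/2) * t ^ (-(2 * (γ + δ))) := by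
            field_simp
      -- end
    have hsb : (0:ℝ) ≤ t ^ (-lam) * Real.cos (x / t ^ (γ + δ)) := by
      have hc := d16_cos γ δ hγ0 hδ t x ht hx
      exact mul_nonneg (Real.rpow_pos_of_pos ht0 _).le
        (le_trans Real.cos_one_pos.le hc)
    have h := d16_core γ δ lam hγ0 hδ t x ht hx
    refine le_trans ?_ h
    apply mul_le_mul_of_nonneg_right _ hsb
    linarith [hcoef]
end
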